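/- Let H be a block Jacobi operator (HΨ)ₙ = −Ψ_{n−1} − Ψ_{n+1} + BₙΨₙ on ℓ²(ℤ₊)⊗ℂˡ and H_{m,n} its restriction to sites m,…,n. Define the boundary resolvent data α, β, γ, δ by (α β; γ δ) = (P_m*; P_n*)(H_{m,n} − z)⁻¹(P_m, P_n). If z ∉ σ(H_{m,n}) and β is invertible, then the transfer matrix product satisfies T^z_{m,n} = (β⁻¹, −β⁻¹α; δβ⁻¹, γ − δβ⁻¹α). -/

import Mathlib

open Matrix

private lemma stmt15_prodrec {M : Type*} [Monoid M] (f : ℕ → M) (k : ℕ) :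
    ((List.range (k+1)).map f).reverse.prod = f k * ((List.range k).map f).reverse.prod := by
  simp [List.range_succ]

theorem stmt15 (l N : ℕ) (B : Fin (N + 1) → Matrix (Fin l) (Fin l) ℂ)
    (hB : ∀ i, (B i).IsHermitian) (z : ℂ)
    (H : Matrix (Fin (N + 1) × Fin l) (Fin (N + 1) × Fin l) ℂ)
    (hH : H = Matrix.of fun p q =>
      if p.1 = q.1 then B p.1 p.2 q.2
      else if (p.1 : ℕ) + 1 = (q.1 : ℕ) ∨ (q.1 : ℕ) + 1 = (p.1 : ℕ) then
        (if p.2 = q.2 then -1 else 0)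
      else 0)
    (P : Fin (N + 1) → Matrix (Fin (N + 1) × Fin l) (Fin l) ℂ)
    (hP : ∀ k, P k = Matrix.of fun p q => if p.1 = k ∧ p.2 = q then 1 else 0)
    (hz : IsUnit (H - z • 1))
    (a b c d : Matrix (Fin l) (Fin l) ℂ)
    (ha : a = (P 0)ᴴ * (H - z • 1)⁻¹ * P 0)
    (hb : b = (P 0)ᴴ * (H - z • 1)⁻¹ * P (Fin.last N))
    (hc : c = (P (Fin.last N))ᴴ * (H - z • 1)⁻¹ * P 0)
    (hd : d = (P (Fin.last N))ᴴ * (H - z • 1)⁻¹ * P (Fin.last N))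
    (hβ : IsUnit b)
    (T : Fin (N + 1) → Matrix (Fin l ⊕ Fin l) (Fin l ⊕ Fin l) ℂ)
    (hT : ∀ k, T k = Matrix.fromBlocks (B k - z • 1) (-1) 1 0) :
    (((List.finRange (N + 1)).map T).reverse.prod) =
      Matrix.fromBlocks b⁻¹ (-(b⁻¹ * a)) (d * b⁻¹) (c - d * b⁻¹ * a) := by
  have hdet : IsUnit (H - z • 1).det := (Matrix.isUnit_iff_isUnit_det _).mp hz
  have hgl : (H - z • 1) * (H - z • 1)⁻¹ = 1 := Matrix.mul_nonsing_inv _ hdet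
  -- entry extraction lemma
  have L0 : ∀ (M : Matrix (Fin (N + 1) × Fin l) (Fin (N + 1) × Fin l) ℂ)
      (j m : Fin (N+1)) (r s : Fin l), ((P j)ᴴ * M * P m) r s = M (j, r) (m, s) := by
    intro M j m r s
    simp [hP, Matrix.mul_apply, conjTranspose_apply, Fintype.sum_prod_type, ite_and,
      apply_ite, Finset.sum_ite_eq, Finset.sum_ite_eq']
  -- resolution of identity
  have L2 : ∑ k, P k * (P k)ᴴ = (1 : Matrix (Fin (N + 1) × Fin l) (Fin (N + 1) × Fin l) ℂ) := by
    ext p q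
    simp [hP, Matrix.sum_apply, Matrix.mul_apply, conjTranspose_apply, ite_and, apply_ite,
      Finset.sum_ite_eq, Finset.sum_ite_eq', Matrix.one_apply, Prod.ext_iff]
    aesop
  -- orthonormality
  have L1 : ∀ j m : Fin (N+1), (P j)ᴴ * P m
      = if j = m then (1 : Matrix (Fin l) (Fin l) ℂ) else 0 := by
    intro j m
    have h := L0 1 j m
    rw [Matrix.mul_one] at h
    ext r s
    rw [h r s]
    by_cases hjm : j = m <;> by_cases hrs : r = s <;>
      simp [hjm, hrs, Matrix.one_apply, Prod.ext_iff]
  -- block entries of H - z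
  have L3 : ∀ j k : Fin (N+1), (P j)ᴴ * (H - z • 1) * P k =
      if j = k then B j - z • 1 else
      if (j : ℕ) + 1 = (k : ℕ) ∨ (k : ℕ) + 1 = (j : ℕ) then -1 else 0 := by
    intro j k
    ext r s
    rw [L0, hH]
    by_cases hjk : j = k
    · subst hjk
      have hadj : ¬((j:ℕ)+1 = (j:ℕ) ∨ (j:ℕ)+1 = (j:ℕ)) := by omega
      by_cases hrs : r = s <;>
        simp [hrs, hadj, Matrix.sub_apply, Matrix.smul_apply, Matrix.one_apply, Prod.ext_iff]
    · have hone : (1 : Matrix (Fin (N+1) × Fin l) (Fin (N+1) × Fin l) ℂ) (j, r) (k, s) = 0 := by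
        simp [Matrix.one_apply, Prod.ext_iff]
        intro h; exact absurd h hjk
      by_cases hadj : (j:ℕ)+1 = (k:ℕ) ∨ (k:ℕ)+1 = (j:ℕ) <;> by_cases hrs : r = s <;>
        simp [hjk, hadj, hrs, Matrix.sub_apply, Matrix.smul_apply, hone,
          Matrix.neg_apply, Matrix.zero_apply]
  set G : Fin (N+1) → Fin (N+1) → Matrix (Fin l) (Fin l) ℂ :=
    fun j m => (P j)ᴴ * (H - z • 1)⁻¹ * P m with hG
  -- master identity from (H-z)·(H-z)⁻¹ = 1
  have key : ∀ j m : Fin (N+1),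
      ∑ k, ((P j)ᴴ * (H - z • 1) * P k) * G k m
        = if j = m then (1 : Matrix (Fin l) (Fin l) ℂ) else 0 := by
    intro j m
    have h1 : ∀ k : Fin (N+1), ((P j)ᴴ * (H - z • 1) * P k) * ((P k)ᴴ * (H - z • 1)⁻¹ * P m)
        = ((P j)ᴴ * (H - z • 1)) * (P k * (P k)ᴴ * ((H - z • 1)⁻¹ * P m)) := by
      intro k; simp only [Matrix.mul_assoc]
    rw [hG, Finset.sum_congr rfl (fun k _ => h1 k), ← Matrix.mul_sum, ← Matrix.sum_mul, L2,
      Matrix.one_mul, Matrix.mul_assoc (P j)ᴴ, ← Matrix.mul_assoc (H - z • 1), hgl,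
      Matrix.one_mul, L1]
  -- master recurrence
  have MR : ∀ j m : Fin (N+1), (B j - z • 1) * G j m =
      (if j = m then (1 : Matrix (Fin l) (Fin l) ℂ) else 0)
      + (if h : (j:ℕ)+1 < N+1 then G ⟨(j:ℕ)+1, h⟩ m else 0)
      + (if h : (j:ℕ) ≠ 0 then G ⟨(j:ℕ)-1, lt_of_le_of_lt (Nat.sub_le _ _) j.isLt⟩ m else 0) := by
    intro j m
    have hkey := key j m
    have split : ∀ k : Fin (N+1), ((P j)ᴴ * (H - z • 1) * P k) * G k m
        = (if k = j then (B j - z • 1) * G k m else 0)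
          - (if (j:ℕ)+1 = (k:ℕ) then G k m else 0)
          - (if (k:ℕ)+1 = (j:ℕ) then G k m else 0) := by
      intro k
      rw [L3]
      by_cases h1 : j = k
      · subst h1
        have h2 : ¬((j:ℕ)+1 = (j:ℕ)) := by omega
        simp [h2]
      · have h1' : ¬(k = j) := fun e => h1 e.symm
        by_cases h2 : (j:ℕ)+1 = (k:ℕ)
        · have h3 : ¬((k:ℕ)+1 = (j:ℕ)) := by omega
          simp [h1, h1', h2, h3, neg_one_mul]
        · by_cases h3 : (k:ℕ)+1 = (j:ℕ)
          · simp [h1, h1', h2, h3, neg_one_mul]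
          · simp [h1, h1', h2, h3]
    rw [Finset.sum_congr rfl (fun k _ => split k), Finset.sum_sub_distrib,
      Finset.sum_sub_distrib, Finset.sum_ite_eq'] at hkey
    have sumU : ∑ k : Fin (N+1), (if (j:ℕ)+1 = (k:ℕ) then G k m else 0)
        = (if h : (j:ℕ)+1 < N+1 then G ⟨(j:ℕ)+1, h⟩ m else 0) := by
      by_cases h : (j:ℕ)+1 < N+1
      · rw [dif_pos h]
        have he : ∀ k : Fin (N+1), (if (j:ℕ)+1 = (k:ℕ) then G k m else 0)
            = (if k = (⟨(j:ℕ)+1, h⟩ : Fin (N+1)) then G k m else 0) := by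
          intro k
          refine if_congr ?_ rfl rfl
          rw [Fin.ext_iff]; simp [eq_comm]
        rw [Finset.sum_congr rfl (fun k _ => he k), Finset.sum_ite_eq']
        simp
      · rw [dif_neg h]
        apply Finset.sum_eq_zero
        intro k _
        rw [if_neg]
        have := k.isLt; omega
    have sumL : ∑ k : Fin (N+1), (if (k:ℕ)+1 = (j:ℕ) then G k m else 0)
        = (if h : (j:ℕ) ≠ 0 then
            G ⟨(j:ℕ)-1, lt_of_le_of_lt (Nat.sub_le _ _) j.isLt⟩ m else 0) := by
      by_cases h : (j:ℕ) = 0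
      · rw [dif_neg (by simp [h])]
        apply Finset.sum_eq_zero
        intro k _
        rw [if_neg]; omega
      · rw [dif_pos h]
        have he : ∀ k : Fin (N+1), (if (k:ℕ)+1 = (j:ℕ) then G k m else 0)
            = (if k = (⟨(j:ℕ)-1, lt_of_le_of_lt (Nat.sub_le _ _) j.isLt⟩ : Fin (N+1))
                then G k m else 0) := by
          intro k
          refine if_congr ?_ rfl rfl
          rw [Fin.ext_iff]
          simp only [Fin.val_mk]
          omega
        rw [Finset.sum_congr rfl (fun k _ => he k), Finset.sum_ite_eq']
        simp
    rw [sumU, sumL, if_pos (Finset.mem_univ j)] at hkey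
    rw [sub_sub, sub_eq_iff_eq_add] at hkey
    rw [hkey]; abel
  -- ℕ-indexed data
  set Bn : ℕ → Matrix (Fin l) (Fin l) ℂ :=
    (fun k => if h : k < N+1 then B ⟨k, h⟩ else 0) with hBn
  set Tn : ℕ → Matrix (Fin l ⊕ Fin l) (Fin l ⊕ Fin l) ℂ :=
    (fun k => if h : k < N+1 then T ⟨k, h⟩ else 1) with hTn
  set UE : ℕ → Matrix (Fin l) (Fin l) ℂ :=
    (fun k => if h : k < N+1 then G ⟨k, h⟩ 0 else 0) with hUE
  set VE : ℕ → Matrix (Fin l) (Fin l) ℂ :=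
    (fun k => if h : k < N+1 then G ⟨k, h⟩ (Fin.last N) else 1) with hVE
  set UU : ℕ → Matrix (Fin l) (Fin l) ℂ :=
    (fun k => if k = 0 then 1 else UE (k-1)) with hUU
  set VV : ℕ → Matrix (Fin l) (Fin l) ℂ :=
    (fun k => if k = 0 then 0 else VE (k-1)) with hVV
  -- recurrences
  have S1 : ∀ k : ℕ, k ≤ N → (Bn k - z • 1) * UE k - UU k = UE (k+1) := by
    intro k hk
    have hk' : k < N+1 := by omega
    have hMR := MR ⟨k, hk'⟩ 0
    simp only [Fin.val_mk] at hMR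
    have hBnk : Bn k = B ⟨k, hk'⟩ := by rw [hBn]; exact dif_pos hk'
    have hUEk : UE k = G ⟨k, hk'⟩ 0 := by rw [hUE]; exact dif_pos hk'
    have hUE1 : UE (k+1) = (if h : k+1 < N+1 then G ⟨k+1, h⟩ 0 else 0) := by rw [hUE]
    rw [hBnk, hUEk, hUE1, hMR]
    by_cases hk0 : k = 0
    · have hδ : (⟨k, hk'⟩ : Fin (N+1)) = 0 := by simp [Fin.ext_iff, hk0]
      have hUUk : UU k = 1 := by simp only [hUU]; rw [if_pos hk0]
      rw [if_pos hδ, dif_neg (by omega : ¬(k ≠ 0)), hUUk, add_zero]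
      abel
    · have hδ : ¬((⟨k, hk'⟩ : Fin (N+1)) = 0) := by simp [Fin.ext_iff, hk0]
      have hk1 : k - 1 < N + 1 := by omega
      have hUUk : UU k = G ⟨k-1, hk1⟩ 0 := by
        simp only [hUU, hUE]; rw [if_neg hk0]; exact dif_pos hk1
      rw [if_neg hδ, dif_pos hk0, hUUk]
      have hpi : G ⟨k-1, lt_of_le_of_lt (Nat.sub_le k 1)
          (Fin.isLt (⟨k, hk'⟩ : Fin (N+1)))⟩ 0 = G ⟨k-1, hk1⟩ 0 := rfl
      rw [hpi]
      abel
  have S2 : ∀ k : ℕ, k ≤ N → (Bn k - z • 1) * VE k - VV k = VE (k+1) := by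
    intro k hk
    have hk' : k < N+1 := by omega
    have hMR := MR ⟨k, hk'⟩ (Fin.last N)
    simp only [Fin.val_mk] at hMR
    have hBnk : Bn k = B ⟨k, hk'⟩ := by rw [hBn]; exact dif_pos hk'
    have hVEk : VE k = G ⟨k, hk'⟩ (Fin.last N) := by rw [hVE]; exact dif_pos hk'
    rw [hBnk, hVEk, hMR]
    by_cases hkN : k = N
    · have hδ : (⟨k, hk'⟩ : Fin (N+1)) = Fin.last N := by simp [Fin.ext_iff, hkN]
      have hVE1 : VE (k+1) = 1 := by
        rw [hVE]; exact dif_neg (by omega)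
      rw [if_pos hδ, dif_neg (by omega : ¬(k + 1 < N + 1)), hVE1, add_zero]
      by_cases hk0 : k = 0
      · have hVVk : VV k = 0 := by simp only [hVV]; rw [if_pos hk0]
        rw [dif_neg (by omega : ¬(k ≠ 0)), hVVk, add_zero, sub_zero]
      · have hk1 : k - 1 < N + 1 := by omega
        have hVVk : VV k = G ⟨k-1, hk1⟩ (Fin.last N) := by
          simp only [hVV, hVE]; rw [if_neg hk0]; exact dif_pos hk1
        rw [dif_pos hk0, hVVk]
        have hpi : G ⟨k-1, lt_of_le_of_lt (Nat.sub_le k 1)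
            (Fin.isLt (⟨k, hk'⟩ : Fin (N+1)))⟩ (Fin.last N)
            = G ⟨k-1, hk1⟩ (Fin.last N) := rfl
        rw [hpi]
        abel
    · have hδ : ¬((⟨k, hk'⟩ : Fin (N+1)) = Fin.last N) := by simp [Fin.ext_iff, hkN]
      have hsucc : k + 1 < N + 1 := by omega
      have hVE1 : VE (k+1) = G ⟨k+1, hsucc⟩ (Fin.last N) := by
        rw [hVE]; exact dif_pos hsucc
      rw [if_neg hδ, dif_pos hsucc, hVE1]
      by_cases hk0 : k = 0
      · have hVVk : VV k = 0 := by simp only [hVV]; rw [if_pos hk0]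
        rw [dif_neg (by omega : ¬(k ≠ 0)), hVVk, add_zero, zero_add, sub_zero]
      · have hk1 : k - 1 < N + 1 := by omega
        have hVVk : VV k = G ⟨k-1, hk1⟩ (Fin.last N) := by
          simp only [hVV, hVE]; rw [if_neg hk0]; exact dif_pos hk1
        rw [dif_pos hk0, hVVk]
        have hpi : G ⟨k-1, lt_of_le_of_lt (Nat.sub_le k 1)
            (Fin.isLt (⟨k, hk'⟩ : Fin (N+1)))⟩ (Fin.last N)
            = G ⟨k-1, hk1⟩ (Fin.last N) := rfl
        rw [hpi]
        abel
  -- main induction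
  have main : ∀ k : ℕ, k ≤ N+1 →
      ((List.range k).map Tn).reverse.prod * Matrix.fromBlocks b a 0 1
        = Matrix.fromBlocks (VE k) (UE k) (VV k) (UU k) := by
    intro k
    induction k with
    | zero =>
      intro _
      have h0 : (0:ℕ) < N+1 := by omega
      have hVE0 : VE 0 = b := by
        simp only [hVE]
        rw [dif_pos h0, show (⟨0, h0⟩ : Fin (N+1)) = 0 from by simp]
        exact hb.symm
      have hUE0 : UE 0 = a := by
        simp only [hUE]
        rw [dif_pos h0, show (⟨0, h0⟩ : Fin (N+1)) = 0 from by simp]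
        exact ha.symm
      simp [hVE0, hUE0, hUU, hVV]
    | succ k ih =>
      intro hk
      have hk' : k < N+1 := by omega
      rw [stmt15_prodrec, mul_assoc, ih (by omega)]
      have hTk : Tn k = Matrix.fromBlocks (Bn k - z • 1) (-1) 1 0 := by
        simp only [hTn, hBn, dif_pos hk']
        exact hT _
      rw [hTk, Matrix.fromBlocks_multiply]
      have e1 : (Bn k - z • 1) * VE k + (-1) * VV k = VE (k+1) := by
        rw [neg_one_mul, ← sub_eq_add_neg]
        exact S2 k (by omega)
      have e2 : (Bn k - z • 1) * UE k + (-1) * UU k = UE (k+1) := by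
        rw [neg_one_mul, ← sub_eq_add_neg]
        exact S1 k (by omega)
      have e3 : (1 : Matrix (Fin l) (Fin l) ℂ) * VE k + 0 * VV k = VV (k+1) := by
        simp [hVV]
      have e4 : (1 : Matrix (Fin l) (Fin l) ℂ) * UE k + 0 * UU k = UU (k+1) := by
        simp [hUU]
      rw [e1, e2, e3, e4]
  -- endpoint values
  have hfull := main (N+1) le_rfl
  have hVEend : VE (N+1) = 1 := by simp [hVE]
  have hUEend : UE (N+1) = 0 := by simp [hUE]
  have hVVend : VV (N+1) = d := by
    simp only [hVV, if_neg (by omega : ¬(N+1 = 0)), Nat.add_sub_cancel, hVE,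
      dif_pos (by omega : N < N+1)]
    exact hd.symm
  have hUUend : UU (N+1) = c := by
    simp only [hUU, if_neg (by omega : ¬(N+1 = 0)), Nat.add_sub_cancel, hUE,
      dif_pos (by omega : N < N+1)]
    exact hc.symm
  rw [hVEend, hUEend, hVVend, hUUend] at hfull
  -- convert the finRange product to the range product
  have hlist : ((List.finRange (N+1)).map T) = (List.range (N+1)).map Tn := by
    rw [← List.map_coe_finRange_eq_range, List.map_map]
    refine List.map_congr_left (fun i _ => ?_)
    simp only [Function.comp_apply, hTn, dif_pos i.isLt, Fin.eta]
  -- invert the boundary-data matrix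
  have hbdet : IsUnit b.det := (Matrix.isUnit_iff_isUnit_det _).mp hβ
  have hbb : b * b⁻¹ = 1 := Matrix.mul_nonsing_inv _ hbdet
  have hKK : Matrix.fromBlocks b a (0 : Matrix (Fin l) (Fin l) ℂ) 1
      * Matrix.fromBlocks b⁻¹ (-(b⁻¹ * a)) (0 : Matrix (Fin l) (Fin l) ℂ) 1 = 1 := by
    rw [Matrix.fromBlocks_multiply]
    have g1 : b * b⁻¹ + a * 0 = (1 : Matrix (Fin l) (Fin l) ℂ) := by
      rw [hbb, mul_zero, add_zero]
    have g2 : b * -(b⁻¹ * a) + a * 1 = (0 : Matrix (Fin l) (Fin l) ℂ) := by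
      rw [mul_neg, ← mul_assoc, hbb, one_mul, mul_one, neg_add_cancel]
    have g3 : (0 : Matrix (Fin l) (Fin l) ℂ) * b⁻¹ + 1 * 0 = 0 := by
      rw [zero_mul, mul_zero, add_zero]
    have g4 : (0 : Matrix (Fin l) (Fin l) ℂ) * -(b⁻¹ * a) + 1 * 1 = 1 := by
      rw [zero_mul, mul_one, zero_add]
    rw [g1, g2, g3, g4, Matrix.fromBlocks_one]
  rw [hlist]
  calc ((List.range (N+1)).map Tn).reverse.prod
      = ((List.range (N+1)).map Tn).reverse.prod
        * (Matrix.fromBlocks b a 0 1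
          * Matrix.fromBlocks b⁻¹ (-(b⁻¹ * a)) (0 : Matrix (Fin l) (Fin l) ℂ) 1) := by
        rw [hKK, mul_one]
    _ = (((List.range (N+1)).map Tn).reverse.prod * Matrix.fromBlocks b a 0 1)
        * Matrix.fromBlocks b⁻¹ (-(b⁻¹ * a)) (0 : Matrix (Fin l) (Fin l) ℂ) 1 := by
        rw [mul_assoc]
    _ = Matrix.fromBlocks 1 0 d c
        * Matrix.fromBlocks b⁻¹ (-(b⁻¹ * a)) (0 : Matrix (Fin l) (Fin l) ℂ) 1 := by
        rw [hfull]
    _ = Matrix.fromBlocks b⁻¹ (-(b⁻¹ * a)) (d * b⁻¹) (c - d * b⁻¹ * a) := by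
        rw [Matrix.fromBlocks_multiply]
        have eA : (1 : Matrix (Fin l) (Fin l) ℂ) * b⁻¹ + 0 * 0 = b⁻¹ := by simp
        have eB : (1 : Matrix (Fin l) (Fin l) ℂ) * -(b⁻¹ * a) + 0 * 1 = -(b⁻¹ * a) := by simp
        have eC : d * b⁻¹ + c * 0 = d * b⁻¹ := by simp
        have eD : d * -(b⁻¹ * a) + c * 1 = c - d * b⁻¹ * a := by
          rw [mul_neg, mul_one, mul_assoc, neg_add_eq_sub]
        rw [eA, eB, eC, eD]
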